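/- Let d ≥ 3 and 0 < p < 1, and let C_d := {W ∈ ℝ^{d×d} : W is positive semidefinite, W₁₁ = W₂₂, and W₁₁ = W_{kk} + 1 for every k = 3, …, d}. Then W̄ := diag(1, 1, 0, …, 0) is not a local minimum of the Schatten-p quasi-norm on C_d: for every δ > 0 there exists W ∈ C_d with ‖W − W̄‖_F < δ and Σ_{k=1}^d λ_k(W)^p < Σ_{k=1}^d λ_k(W̄)^p = 2. (A witness is the matrix with upper-left 2×2 block [[1, ε],[ε, 1]] and zeros elsewhere, for small ε ∈ (0,1), whose nonzero eigenvalues are 1 + ε and 1 − ε, and (1+ε)^p + (1−ε)^p < 2.) -/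

import Mathlib

open Matrix

lemma two_point_sum {d : ℕ} (i0 i1 : Fin d) (h : i0 ≠ i1) (a b : ℝ) :
    ∑ i, (if i = i0 then a else if i = i1 then b else 0) = a + b := by
  have he : ∀ i : Fin d, (if i = i0 then a else if i = i1 then b else 0)
      = (if i = i0 then a else 0) + (if i = i1 then b else 0) := by
    intro i
    by_cases h0 : i = i0 <;> by_cases h1 : i = i1 <;> simp_all
  simp [he, Finset.sum_add_distrib, Finset.sum_ite_eq']

lemma vmv_mul {d : ℕ} (x y z w : Fin d → ℝ) :
    vecMulVec x y * vecMulVec z w = (y ⬝ᵥ z) • vecMulVec x w := by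
  ext i j
  simp only [Matrix.mul_apply, vecMulVec_apply, Matrix.smul_apply, dotProduct, smul_eq_mul,
    Finset.sum_mul]
  refine Finset.sum_congr rfl fun k _ => by ring

lemma psd_vmv {d : ℕ} (u : Fin d → ℝ) : (vecMulVec u u).PosSemidef := by
  refine Matrix.PosSemidef.of_dotProduct_mulVec_nonneg ?_ ?_
  · ext i j
    simp [Matrix.conjTranspose_apply, vecMulVec_apply, mul_comm]
  · intro x
    have h : vecMulVec u u *ᵥ x = (u ⬝ᵥ x) • u := by
      ext i
      simp only [Matrix.mulVec, dotProduct, vecMulVec_apply, Pi.smul_apply, smul_eq_mul,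
        Finset.sum_mul]
      exact Finset.sum_congr rfl fun k _ => by ring
    rw [h]
    have : star x ⬝ᵥ ((u ⬝ᵥ x) • u) = (u ⬝ᵥ x) * (u ⬝ᵥ x) := by
      simp [dotProduct_smul, dotProduct, Finset.mul_sum]
      exact Finset.sum_congr rfl fun k _ => by ring
    rw [this]
    exact mul_self_nonneg _

lemma trace_eq_sum_eig {d : ℕ} {A : Matrix (Fin d) (Fin d) ℝ} (hA : A.IsHermitian) :
    A.trace = ∑ i, hA.eigenvalues i := by
  rw [hA.trace_eq_sum_eigenvalues]
  simp

lemma eig_cubic {d : ℕ} {A : Matrix (Fin d) (Fin d) ℝ} (hA : A.IsHermitian) (c₃ c₂ c₁ : ℝ)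
    (hM : c₃ • (A * A * A) + c₂ • (A * A) + c₁ • A = 0) (i : Fin d) :
    c₃ * (hA.eigenvalues i)^3 + c₂ * (hA.eigenvalues i)^2 + c₁ * hA.eigenvalues i = 0 := by
  have hv := hA.mulVec_eigenvectorBasis i
  set t := hA.eigenvalues i with ht
  set v : Fin d → ℝ := ⇑(hA.eigenvectorBasis i) with hvdef
  have h2 : (A * A) *ᵥ v = (t^2) • v := by
    rw [← Matrix.mulVec_mulVec, hv, Matrix.mulVec_smul, hv, smul_smul]; ring_nf
  have h3 : (A * A * A) *ᵥ v = (t^3) • v := by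
    rw [← Matrix.mulVec_mulVec, hv, Matrix.mulVec_smul, h2, smul_smul]; ring_nf
  have hcomb : (c₃ * t^3 + c₂ * t^2 + c₁ * t) • v = 0 := by
    have hmv := congrArg (fun M => M *ᵥ v) hM
    simp only [Matrix.add_mulVec, Matrix.smul_mulVec, h2, h3, hv, Matrix.zero_mulVec,
      smul_smul] at hmv
    rw [add_smul, add_smul]
    exact hmv
  rcases smul_eq_zero.mp hcomb with h | h
  · exact h
  · exfalso
    apply hA.eigenvectorBasis.orthonormal.ne_zero i
    ext j
    exact congrFun h j

lemma psd_smul {d : ℕ} {A : Matrix (Fin d) (Fin d) ℝ} (hA : A.PosSemidef) {c : ℝ} (hc : 0 ≤ c) :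
    (c • A).PosSemidef := by
  refine Matrix.PosSemidef.of_dotProduct_mulVec_nonneg ?_ ?_
  · show (c • A)ᴴ = c • A
    rw [Matrix.conjTranspose_smul, star_trivial, hA.1]
  · intro x
    rw [Matrix.smul_mulVec, dotProduct_smul, smul_eq_mul]
    exact mul_nonneg hc (hA.dotProduct_mulVec_nonneg x)

set_option maxHeartbeats 2000000 in
theorem stmt4 {d : ℕ} (hd : 3 ≤ d) (p : ℝ) (hp0 : 0 < p) (hp1 : p < 1)
    (Wbar : Matrix (Fin d) (Fin d) ℝ)
    (hWbar : Wbar = Matrix.diagonal (fun k : Fin d => if (k : ℕ) < 2 then (1 : ℝ) else 0))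
    (hWbar_psd : Wbar.PosSemidef) :
    (∑ k, (hWbar_psd.1.eigenvalues k) ^ p) = 2 ∧
    ∀ δ : ℝ, 0 < δ → ∃ (W : Matrix (Fin d) (Fin d) ℝ) (hW_psd : W.PosSemidef),
      W ⟨0, by omega⟩ ⟨0, by omega⟩ = W ⟨1, by omega⟩ ⟨1, by omega⟩ ∧
      (∀ k : Fin d, 2 ≤ (k : ℕ) → W ⟨0, by omega⟩ ⟨0, by omega⟩ = W k k + 1) ∧
      Real.sqrt (∑ i, ∑ j, (W i j - Wbar i j) ^ 2) < δ ∧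
      (∑ k, (hW_psd.1.eigenvalues k) ^ p) < 2 := by
  have h0d : 0 < d := by omega
  have h1d : 1 < d := by omega
  set i0 : Fin d := ⟨0, h0d⟩ with hi0
  set i1 : Fin d := ⟨1, h1d⟩ with hi1
  have hne : i0 ≠ i1 := by simp [hi0, hi1, Fin.ext_iff]
  have key : ∀ i : Fin d, ((i : ℕ) < 2) ↔ (i = i0 ∨ i = i1) := by
    intro i
    simp only [Fin.ext_iff, hi0, hi1]
    omega
  constructor
  · -- Part 1
    have hWW : Wbar * Wbar = Wbar := by
      rw [hWbar, Matrix.diagonal_mul_diagonal]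
      refine congrArg Matrix.diagonal (funext fun i => ?_)
      by_cases h : (i : ℕ) < 2 <;> simp [h]
    have hM : (0:ℝ) • (Wbar * Wbar * Wbar) + (1:ℝ) • (Wbar * Wbar) + (-1:ℝ) • Wbar = 0 := by
      rw [hWW]; module
    have hev : ∀ i, hWbar_psd.1.eigenvalues i = 0 ∨ hWbar_psd.1.eigenvalues i = 1 := by
      intro i
      have h := eig_cubic hWbar_psd.1 0 1 (-1) hM i
      have h2 : hWbar_psd.1.eigenvalues i * (hWbar_psd.1.eigenvalues i - 1) = 0 := by
        nlinarith [h]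
      rcases mul_eq_zero.mp h2 with h | h
      · exact Or.inl h
      · exact Or.inr (by linarith)
    have hsum : ∑ k, (hWbar_psd.1.eigenvalues k) ^ p = ∑ k, hWbar_psd.1.eigenvalues k := by
      refine Finset.sum_congr rfl fun k _ => ?_
      rcases hev k with h | h <;> rw [h]
      · exact Real.zero_rpow hp0.ne'
      · exact Real.one_rpow p
    rw [hsum, ← trace_eq_sum_eig hWbar_psd.1, hWbar, Matrix.trace_diagonal]
    have hform : ∀ i : Fin d, (if (i : ℕ) < 2 then (1:ℝ) else 0)
        = if i = i0 then 1 else if i = i1 then 1 else 0 := by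
      intro i
      by_cases h : (i : ℕ) < 2
      · rcases (key i).mp h with h0 | h0 <;> simp [h, h0, hne, hi0, hi1]
      · have h0 : i ≠ i0 := fun e => h ((key i).mpr (Or.inl e))
        have h1 : i ≠ i1 := fun e => h ((key i).mpr (Or.inr e))
        simp [h, h0, h1]
    rw [Finset.sum_congr rfl fun i _ => hform i, two_point_sum i0 i1 hne]
    norm_num
  · -- Part 2
    intro δ hδ
    set n : ℕ := max 2 (⌈2/δ⌉₊ + 1) with hn
    have hn2 : 2 ≤ n := le_max_left _ _
    have hnpos : (0:ℝ) < n := by positivity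
    have hngt : 2/δ < (n:ℝ) := by
      have h1 : 2/δ ≤ (⌈2/δ⌉₊ : ℝ) := Nat.le_ceil _
      have h2 : (⌈2/δ⌉₊ + 1 : ℕ) ≤ n := le_max_right _ _
      have := Nat.cast_le (α := ℝ).mpr h2
      push_cast at this
      linarith
    set ε : ℝ := Real.sqrt 2 / n with hε
    have hsqrt2 : (0:ℝ) < Real.sqrt 2 := Real.sqrt_pos.mpr (by norm_num)
    have hε0 : 0 < ε := by positivity
    have hε1 : ε < 1 := by
      rw [hε, div_lt_one hnpos]
      have : Real.sqrt 2 < 2 := by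
        nlinarith [Real.sq_sqrt (by norm_num : (2:ℝ) ≥ 0), Real.sqrt_nonneg 2]
      have : (2:ℝ) ≤ n := by exact_mod_cast hn2
      linarith [‹Real.sqrt 2 < 2›]
    have hirr : Irrational ε := by
      have : Irrational (Real.sqrt 2 / ((n : ℤ) : ℝ)) :=
        irrational_sqrt_two.div_intCast (by exact_mod_cast (by omega : n ≠ 0))
      rwa [hε]
    -- the vectors
    set u : Fin d → ℝ := fun i => if i = i0 then 1 else if i = i1 then 1 else 0 with hu
    set v : Fin d → ℝ := fun i => if i = i0 then 1 else if i = i1 then -1 else 0 with hv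
    have huu : u ⬝ᵥ u = 2 := by
      have hptw : ∀ i, u i * u i = if i = i0 then (1:ℝ) else if i = i1 then 1 else 0 := by
        intro i
        by_cases h0 : i = i0 <;> by_cases h1 : i = i1 <;> simp [hu, h0, h1, Ne.symm hne]
      rw [dotProduct, Finset.sum_congr rfl fun i _ => hptw i, two_point_sum i0 i1 hne]
      norm_num
    have huv : u ⬝ᵥ v = 0 := by
      have hptw : ∀ i, u i * v i = if i = i0 then (1:ℝ) else if i = i1 then -1 else 0 := by
        intro i
        by_cases h0 : i = i0 <;> by_cases h1 : i = i1 <;> simp [hu, hv, h0, h1, Ne.symm hne]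
      rw [dotProduct, Finset.sum_congr rfl fun i _ => hptw i, two_point_sum i0 i1 hne]
      norm_num
    have hvu : v ⬝ᵥ u = 0 := by
      have hptw : ∀ i, v i * u i = if i = i0 then (1:ℝ) else if i = i1 then -1 else 0 := by
        intro i
        by_cases h0 : i = i0 <;> by_cases h1 : i = i1 <;> simp [hu, hv, h0, h1, Ne.symm hne]
      rw [dotProduct, Finset.sum_congr rfl fun i _ => hptw i, two_point_sum i0 i1 hne]
      norm_num
    have hvv : v ⬝ᵥ v = 2 := by
      have hptw : ∀ i, v i * v i = if i = i0 then (1:ℝ) else if i = i1 then 1 else 0 := by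
        intro i
        by_cases h0 : i = i0 <;> by_cases h1 : i = i1 <;> simp [hv, h0, h1, Ne.symm hne]
      rw [dotProduct, Finset.sum_congr rfl fun i _ => hptw i, two_point_sum i0 i1 hne]
      norm_num
    set a : ℝ := (1 + ε)/2 with ha
    set b : ℝ := (1 - ε)/2 with hb
    have ha0 : 0 < a := by rw [ha]; linarith
    have hb0 : 0 < b := by rw [hb]; linarith
    set P : Matrix (Fin d) (Fin d) ℝ := vecMulVec u u with hP
    set Q : Matrix (Fin d) (Fin d) ℝ := vecMulVec v v with hQ
    set W : Matrix (Fin d) (Fin d) ℝ := a • P + b • Q with hWdef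
    have hpsd : W.PosSemidef :=
      (psd_smul (psd_vmv u) ha0.le).add (psd_smul (psd_vmv v) hb0.le)
    -- entries
    have hWe : ∀ i j, W i j = a * (u i * u j) + b * (v i * v j) := by
      intro i j
      simp [hWdef, hP, hQ, Matrix.add_apply, Matrix.smul_apply, vecMulVec_apply]
    have hW00 : W i0 i0 = 1 := by
      rw [hWe]; simp [hu, hv]; rw [ha, hb]; ring
    have hW11 : W i1 i1 = 1 := by
      rw [hWe]; simp [hu, hv, Ne.symm hne]; rw [ha, hb]; ring
    have hWkk : ∀ k : Fin d, 2 ≤ (k : ℕ) → W k k = 0 := by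
      intro k hk
      have h0 : k ≠ i0 := fun e => by rw [e, hi0] at hk; simp at hk
      have h1 : k ≠ i1 := fun e => by rw [e, hi1] at hk; simp at hk
      rw [hWe]; simp [hu, hv, h0, h1]
    -- matrix algebra
    have hPP : P * P = (2:ℝ) • P := by rw [hP, vmv_mul, huu]
    have hQQ : Q * Q = (2:ℝ) • Q := by rw [hQ, vmv_mul, hvv]
    have hPQ : P * Q = 0 := by rw [hP, hQ, vmv_mul, huv, zero_smul]
    have hQP : Q * P = 0 := by rw [hP, hQ, vmv_mul, hvu, zero_smul]
    have hW2 : W * W = (2*a^2) • P + (2*b^2) • Q := by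
      rw [hWdef]
      simp only [add_mul, mul_add, Matrix.smul_mul, Matrix.mul_smul, hPP, hPQ, hQP, hQQ,
        smul_smul, smul_zero, add_zero, zero_add]
      module
    have hW3 : W * W * W = (4*a^3) • P + (4*b^3) • Q := by
      rw [hW2, hWdef]
      simp only [add_mul, mul_add, Matrix.smul_mul, Matrix.mul_smul, hPP, hPQ, hQP, hQQ,
        smul_smul, smul_zero, add_zero, zero_add]
      module
    have hM : (1:ℝ) • (W * W * W) + (-2:ℝ) • (W * W) + (1 - ε^2) • W = 0 := by
      rw [hW3, hW2, hWdef, ha, hb]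
      module
    have hev : ∀ i, hpsd.1.eigenvalues i = 0 ∨ hpsd.1.eigenvalues i = 1+ε ∨
        hpsd.1.eigenvalues i = 1-ε := by
      intro i
      have h := eig_cubic hpsd.1 1 (-2) (1-ε^2) hM i
      set t := hpsd.1.eigenvalues i
      have h2 : t * ((t - (1+ε)) * (t - (1-ε))) = 0 := by nlinarith [h]
      rcases mul_eq_zero.mp h2 with h | h
      · exact Or.inl h
      · rcases mul_eq_zero.mp h with h | h
        · exact Or.inr (Or.inl (by linarith))
        · exact Or.inr (Or.inr (by linarith))
    set ev := hpsd.1.eigenvalues with hevdef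
    classical
    set s : Finset (Fin d) := Finset.univ.filter (fun i => ev i = 1+ε) with hs
    set t2 : Finset (Fin d) :=
      (Finset.univ.filter (fun i => ¬ ev i = 1+ε)).filter (fun i => ev i = 1-ε) with ht2
    have hsplit : ∀ f : ℝ → ℝ, f 0 = 0 →
        ∑ i, f (ev i) = (s.card : ℝ) * f (1+ε) + (t2.card : ℝ) * f (1-ε) := by
      intro f hf
      rw [← Finset.sum_filter_add_sum_filter_not Finset.univ (fun i => ev i = 1+ε)
        (fun i => f (ev i))]
      have e1 : ∑ i ∈ Finset.univ.filter (fun i => ev i = 1+ε), f (ev i)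
          = (s.card : ℝ) * f (1+ε) := by
        rw [Finset.sum_congr rfl (fun i hi => by rw [(Finset.mem_filter.mp hi).2]),
          Finset.sum_const, nsmul_eq_mul]
      have e2 : ∑ i ∈ Finset.univ.filter (fun i => ¬ ev i = 1+ε), f (ev i)
          = (t2.card : ℝ) * f (1-ε) := by
        rw [← Finset.sum_filter_add_sum_filter_not
          (Finset.univ.filter (fun i => ¬ ev i = 1+ε)) (fun i => ev i = 1-ε)
          (fun i => f (ev i))]
        have e3 : ∑ i ∈ (Finset.univ.filter (fun i => ¬ ev i = 1+ε)).filter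
            (fun i => ev i = 1-ε), f (ev i) = (t2.card : ℝ) * f (1-ε) := by
          rw [Finset.sum_congr rfl (fun i hi => by
              rw [(Finset.mem_filter.mp hi).2]),
            Finset.sum_const, nsmul_eq_mul]
        have e4 : ∑ i ∈ (Finset.univ.filter (fun i => ¬ ev i = 1+ε)).filter
            (fun i => ¬ ev i = 1-ε), f (ev i) = 0 := by
          refine Finset.sum_eq_zero fun i hi => ?_
          have h1 := (Finset.mem_filter.mp hi).2
          have h2 := (Finset.mem_filter.mp (Finset.mem_filter.mp hi).1).2
          rcases hev i with h | h | h
          · rw [h, hf]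
          · exact absurd h h2
          · exact absurd h h1
        rw [e3, e4, add_zero]
      rw [e1, e2]
    have hdi : ∀ i, W i i = if i = i0 then (1:ℝ) else if i = i1 then 1 else 0 := by
      intro i
      by_cases h0 : i = i0
      · rw [h0, hW00]; simp
      by_cases h1 : i = i1
      · rw [h1, hW11]; simp [Ne.symm hne]
      · have hz : W i i = 0 := by rw [hWe]; simp [hu, hv, h0, h1]
        rw [hz]; simp [h0, h1]
    have htr : W.trace = 2 := by
      have : W.trace = ∑ i, W i i := by simp [Matrix.trace, Matrix.diag]
      rw [this, Finset.sum_congr rfl fun i _ => hdi i, two_point_sum i0 i1 hne]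
      norm_num
    have heq1 : (s.card : ℝ) * (1+ε) + (t2.card : ℝ) * (1-ε) = 2 := by
      have h1 := hsplit (fun x => x) rfl
      have h2 := trace_eq_sum_eig hpsd.1
      rw [htr] at h2
      rw [← h1, ← h2]
    have hcards : s.card = t2.card := by
      by_contra hne2
      have hz : ((s.card:ℝ) - t2.card) ≠ 0 := by
        intro h
        exact hne2 (Nat.cast_injective (by linarith : (s.card:ℝ) = t2.card))
      have hεeq : ε = ((2 - s.card - t2.card : ℤ) : ℝ) / ((s.card - t2.card : ℤ) : ℝ) := by
        have hz2 : ((s.card - t2.card : ℤ) : ℝ) ≠ 0 := by push_cast; exact hz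
        rw [eq_div_iff hz2]
        push_cast
        linear_combination heq1
      exact (irrational_iff_ne_rational ε).mp hirr _ _ (by intro hb; apply hne2; omega) hεeq
    have hs1 : s.card = 1 := by
      have h2 : (s.card : ℝ) * 2 = 2 := by
        rw [hcards] at heq1 ⊢
        linarith [heq1]
      have : (s.card : ℝ) = 1 := by linarith
      exact_mod_cast this
    have ht1 : t2.card = 1 := by rw [← hcards, hs1]
    have heqp : ∑ i, (ev i) ^ p = (1+ε)^p + (1-ε)^p := by
      have h := hsplit (fun x => x ^ p) (Real.zero_rpow hp0.ne')
      rw [hs1, ht1] at h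
      rw [Nat.cast_one, one_mul, one_mul] at h
      exact h
    have hconc : (1+ε)^p + (1-ε)^p < 2 := by
      have hsc := Real.strictConcaveOn_rpow hp0 hp1
      have h := hsc.2 (Set.mem_Ici.mpr (by linarith : (0:ℝ) ≤ 1-ε))
        (Set.mem_Ici.mpr (by linarith : (0:ℝ) ≤ 1+ε))
        (by intro h; linarith [congrArg id h] : (1:ℝ)-ε ≠ 1+ε)
        (by norm_num : (0:ℝ) < 1/2) (by norm_num : (0:ℝ) < 1/2) (by norm_num)
      have key2 : (1/2:ℝ) • ((1:ℝ)-ε)^p + (1/2:ℝ) • ((1:ℝ)+ε)^p < ((1:ℝ))^p := by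
        calc (1/2:ℝ) • ((1:ℝ)-ε)^p + (1/2:ℝ) • ((1:ℝ)+ε)^p
            < ((1/2:ℝ) • ((1:ℝ)-ε) + (1/2:ℝ) • ((1:ℝ)+ε))^p := h
          _ = ((1:ℝ))^p := by
              have hmid : (1/2:ℝ) • ((1:ℝ)-ε) + (1/2:ℝ) • ((1:ℝ)+ε) = 1 := by
                simp only [smul_eq_mul]; ring
              rw [hmid]
      rw [Real.one_rpow] at key2
      simp only [smul_eq_mul] at key2
      linarith
    -- Frobenius distance
    have hu0 : u i0 = 1 := by simp [hu]
    have hu1 : u i1 = 1 := by simp [hu, Ne.symm hne]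
    have hv0 : v i0 = 1 := by simp [hv]
    have hv1 : v i1 = -1 := by simp [hv, Ne.symm hne]
    have huo : ∀ i, i ≠ i0 → i ≠ i1 → u i = 0 := by intro i h0 h1; simp [hu, h0, h1]
    have hvo : ∀ i, i ≠ i0 → i ≠ i1 → v i = 0 := by intro i h0 h1; simp [hv, h0, h1]
    have hb00 : Wbar i0 i0 = 1 := by
      rw [hWbar, Matrix.diagonal_apply_eq, hi0]
      norm_num
    have hb11 : Wbar i1 i1 = 1 := by
      rw [hWbar, Matrix.diagonal_apply_eq, hi1]
      norm_num
    have hbne : ∀ i j : Fin d, i ≠ j → Wbar i j = 0 := by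
      intro i j hij; rw [hWbar]; exact Matrix.diagonal_apply_ne _ hij
    have hbkk : ∀ i : Fin d, i ≠ i0 → i ≠ i1 → Wbar i i = 0 := by
      intro i h0 h1
      have hlt : ¬ (i : ℕ) < 2 := fun h => by
        rcases (key i).mp h with e | e
        exacts [h0 e, h1 e]
      rw [hWbar, Matrix.diagonal_apply_eq, if_neg hlt]
    have hdiff : ∀ i j, (W i j - Wbar i j)^2 = if i = i0 then (if j = i1 then ε^2 else 0)
        else if i = i1 then (if j = i0 then ε^2 else 0) else 0 := by
      intro i j
      rcases eq_or_ne i i0 with h0 | h0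
      · subst h0
        rcases eq_or_ne j i0 with g0 | g0
        · subst g0
          rw [hW00, hb00]
          simp [hne]
        · rcases eq_or_ne j i1 with g1 | g1
          · subst g1
            rw [hWe, hu0, hu1, hv0, hv1, hbne _ _ hne]
            have he2 : a * (1*1) + b * (1*(-1)) - 0 = ε := by rw [ha, hb]; ring
            rw [he2]; simp
          · rw [hWe, huo j g0 g1, hvo j g0 g1, hbne _ _ (fun e => g0 e.symm)]
            simp [g1]
      · rcases eq_or_ne i i1 with h1 | h1
        · subst h1
          rcases eq_or_ne j i0 with g0 | g0
          · subst g0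
            rw [hWe, hu0, hu1, hv0, hv1, hbne _ _ (Ne.symm hne)]
            have he2 : a * (1*1) + b * ((-1)*1) - 0 = ε := by rw [ha, hb]; ring
            rw [he2]; simp [Ne.symm hne]
          · rcases eq_or_ne j i1 with g1 | g1
            · subst g1
              rw [hW11, hb11]
              simp [Ne.symm hne]
            · rw [hWe, huo j g0 g1, hvo j g0 g1, hbne _ _ (fun e => g1 e.symm)]
              simp [h0, g0]
        · have hwb : Wbar i j = 0 := by
            rcases eq_or_ne i j with e | e
            · rw [← e]; exact hbkk i h0 h1
            · exact hbne _ _ e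
          rw [hWe, huo i h0 h1, hvo i h0 h1, hwb]
          simp [h0, h1]
    have hfrob : ∑ i, ∑ j, (W i j - Wbar i j)^2 = 2*ε^2 := by
      rw [Finset.sum_congr rfl fun i (_ : i ∈ Finset.univ) =>
        Finset.sum_congr rfl fun j (_ : j ∈ Finset.univ) => hdiff i j]
      have hin : ∀ i : Fin d, ∑ j, (if i = i0 then (if j = i1 then ε^2 else 0)
          else if i = i1 then (if j = i0 then ε^2 else 0) else 0)
          = if i = i0 then ε^2 else if i = i1 then ε^2 else 0 := by
        intro i
        by_cases h0 : i = i0 <;> by_cases h1 : i = i1 <;>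
          simp [h0, h1, Finset.sum_ite_eq']
      rw [Finset.sum_congr rfl fun i (_ : i ∈ Finset.univ) => hin i,
        two_point_sum i0 i1 hne]
      ring
    refine ⟨W, hpsd, ?_, ?_, ?_, ?_⟩
    · show W i0 i0 = W i1 i1
      rw [hW00, hW11]
    · intro k hk
      show W i0 i0 = W k k + 1
      rw [hW00, hWkk k hk]
      norm_num
    · rw [hfrob]
      have hsq : 2*ε^2 = (Real.sqrt 2 * ε)^2 := by
        have h2 : Real.sqrt 2 ^ 2 = 2 := Real.sq_sqrt (by norm_num)
        nlinarith [h2]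
      rw [hsq, Real.sqrt_sq (by positivity)]
      have hval : Real.sqrt 2 * ε = 2 / n := by
        rw [hε, ← mul_div_assoc, Real.mul_self_sqrt (by norm_num)]
      rw [hval, div_lt_iff₀ hnpos]
      have := (div_lt_iff₀ hδ).mp hngt
      linarith [this]
    · show ∑ k, (ev k) ^ p < 2
      rw [heqp]
      exact hconc
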